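/- Let U be a finite nonempty type and n : ℕ. For each i < n let c_i and c'_i assign to every length-i prefix v ∈ (Fin i → U) a pmf on U (so c_i(·|v) ≥ 0 and ∑_{a} c_i(a|v) = 1, and likewise for c'_i). Define the induced pmfs on sequences by P(u) = ∏_{i<n} c_i(u_i | u_0, …, u_{i−1}) and Q(u) = ∏_{i<n} c'_i(u_i | u_0, …, u_{i−1}), and for i < n let P_{<i}(v) = ∏_{j<i} c_j(v_j | v_0, …, v_{j−1}) denote the marginal of P on the first i coordinates. Let F ⊆ Fin n and suppose c_i = c'_i for every i ∉ F. Then ∑_{u} |P(u) − Q(u)| ≤ ∑_{i ∈ F} ∑_{v ∈ (Fin i → U)} P_{<i}(v) · ∑_{a ∈ U} |c_i(a|v) − c'_i(a|v)|. -/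

import Mathlib

/-- The length-`i` prefix of a sequence `v` of length `m`, for `i : Fin m`. -/
def pre {U : Type*} {m : ℕ} (v : Fin m → U) (i : Fin m) : Fin i.val → U :=
  fun j => v (Fin.castLT j (j.isLt.trans i.isLt))

section Aux

variable {U : Type*} [Fintype U]

private lemma sum_snoc_aux {n : ℕ} (f : (Fin (n + 1) → U) → ℝ) :
    ∑ u : Fin (n + 1) → U, f u = ∑ v : Fin n → U, ∑ a : U, f (Fin.snoc v a) := by
  rw [← Equiv.sum_comp (Fin.snocEquiv (fun _ => U)) f, Fintype.sum_prod_type,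
    Finset.sum_comm]
  rfl

private lemma pre_snoc {n : ℕ} (v : Fin n → U) (a : U) (i : Fin n) :
    pre (Fin.snoc v a) i.castSucc = pre v i := by
  funext j
  show (Fin.snoc v a : Fin (n+1) → U) _ = v _
  have : (Fin.castLT j (j.isLt.trans i.castSucc.isLt) : Fin (n+1)) =
      Fin.castSucc (Fin.castLT j (j.isLt.trans i.isLt)) := by
    apply Fin.ext; rfl
  rw [this, Fin.snoc_castSucc]

private lemma pre_snoc_last {n : ℕ} (v : Fin n → U) (a : U) :
    pre (Fin.snoc v a) (Fin.last n) = v := by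
  funext j
  show (Fin.snoc v a : Fin (n+1) → U) _ = v _
  have : (Fin.castLT j (j.isLt.trans (Fin.last n).isLt) : Fin (n+1)) =
      Fin.castSucc j := by apply Fin.ext; rfl
  rw [this, Fin.snoc_castSucc]

private lemma prod_snoc_aux {n : ℕ} (C : (i : ℕ) → (Fin i → U) → U → ℝ)
    (v : Fin n → U) (a : U) :
    (∏ i : Fin (n + 1), C i.val (pre (Fin.snoc v a) i) ((Fin.snoc v a : Fin (n+1) → U) i)) =
      (∏ i : Fin n, C i.val (pre v i) (v i)) * C n v a := by
  rw [Fin.prod_univ_castSucc]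
  congr 1
  · apply Finset.prod_congr rfl
    intro i _
    rw [pre_snoc, Fin.snoc_castSucc]
    rfl
  · rw [pre_snoc_last, Fin.snoc_last]
    rfl

private lemma aux_lemma (C C' : (i : ℕ) → (Fin i → U) → U → ℝ)
    (hC0 : ∀ i v a, 0 ≤ C i v a) (hC1 : ∀ i v, ∑ a, C i v a = 1)
    (hC'0 : ∀ i v a, 0 ≤ C' i v a) (hC'1 : ∀ i v, ∑ a, C' i v a = 1) :
    ∀ n : ℕ,
      ∑ u : Fin n → U,
          |(∏ i : Fin n, C i.val (pre u i) (u i)) -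
            (∏ i : Fin n, C' i.val (pre u i) (u i))| ≤
        ∑ i ∈ Finset.range n, ∑ v : Fin i → U,
          (∏ j : Fin i, C j.val (pre v j) (v j)) * ∑ a, |C i v a - C' i v a| := by
  intro n
  induction n with
  | zero => simp
  | succ n ih =>
    rw [sum_snoc_aux, Finset.sum_range_succ]
    have key : ∀ v : Fin n → U, ∑ a : U,
        |(∏ i : Fin (n+1), C i.val (pre (Fin.snoc v a) i) ((Fin.snoc v a : Fin (n+1) → U) i)) -
          (∏ i : Fin (n+1), C' i.val (pre (Fin.snoc v a) i) ((Fin.snoc v a : Fin (n+1) → U) i))| ≤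
        |(∏ i : Fin n, C i.val (pre v i) (v i)) - (∏ i : Fin n, C' i.val (pre v i) (v i))| +
          (∏ i : Fin n, C i.val (pre v i) (v i)) * ∑ a, |C n v a - C' n v a| := by
      intro v
      have hP : 0 ≤ ∏ i : Fin n, C i.val (pre v i) (v i) :=
        Finset.prod_nonneg fun i _ => hC0 _ _ _
      calc ∑ a : U, |(∏ i : Fin (n+1), C i.val (pre (Fin.snoc v a) i) ((Fin.snoc v a : Fin (n+1) → U) i)) -
              (∏ i : Fin (n+1), C' i.val (pre (Fin.snoc v a) i) ((Fin.snoc v a : Fin (n+1) → U) i))|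
          = ∑ a : U, |(∏ i : Fin n, C i.val (pre v i) (v i)) * C n v a -
              (∏ i : Fin n, C' i.val (pre v i) (v i)) * C' n v a| := by
            apply Finset.sum_congr rfl; intro a _
            rw [prod_snoc_aux, prod_snoc_aux]
        _ ≤ ∑ a : U,
              (|(∏ i : Fin n, C i.val (pre v i) (v i)) - (∏ i : Fin n, C' i.val (pre v i) (v i))| * C' n v a +
               (∏ i : Fin n, C i.val (pre v i) (v i)) * |C n v a - C' n v a|) := by
            apply Finset.sum_le_sum; intro a _
            have : (∏ i : Fin n, C i.val (pre v i) (v i)) * C n v a -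
                (∏ i : Fin n, C' i.val (pre v i) (v i)) * C' n v a =
                ((∏ i : Fin n, C i.val (pre v i) (v i)) - (∏ i : Fin n, C' i.val (pre v i) (v i))) *
                  C' n v a +
                (∏ i : Fin n, C i.val (pre v i) (v i)) * (C n v a - C' n v a) := by ring
            rw [this]
            refine (abs_add_le _ _).trans ?_
            rw [abs_mul, abs_mul, abs_of_nonneg (hC'0 _ _ _), abs_of_nonneg hP]
        _ = |(∏ i : Fin n, C i.val (pre v i) (v i)) - (∏ i : Fin n, C' i.val (pre v i) (v i))| +
              (∏ i : Fin n, C i.val (pre v i) (v i)) * ∑ a, |C n v a - C' n v a| := by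
            rw [Finset.sum_add_distrib, ← Finset.mul_sum, ← Finset.mul_sum, hC'1, mul_one]
    calc ∑ v : Fin n → U, ∑ a : U,
          |(∏ i : Fin (n+1), C i.val (pre (Fin.snoc v a) i) ((Fin.snoc v a : Fin (n+1) → U) i)) -
            (∏ i : Fin (n+1), C' i.val (pre (Fin.snoc v a) i) ((Fin.snoc v a : Fin (n+1) → U) i))|
        ≤ ∑ v : Fin n → U,
            (|(∏ i : Fin n, C i.val (pre v i) (v i)) - (∏ i : Fin n, C' i.val (pre v i) (v i))| +
              (∏ i : Fin n, C i.val (pre v i) (v i)) * ∑ a, |C n v a - C' n v a|) :=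
          Finset.sum_le_sum fun v _ => key v
      _ = (∑ v : Fin n → U,
            |(∏ i : Fin n, C i.val (pre v i) (v i)) - (∏ i : Fin n, C' i.val (pre v i) (v i))|) +
          ∑ v : Fin n → U,
            (∏ i : Fin n, C i.val (pre v i) (v i)) * ∑ a, |C n v a - C' n v a| :=
          Finset.sum_add_distrib
      _ ≤ _ := add_le_add_left ih _

end Aux

theorem stmt_4 {U : Type*} [Fintype U] [Nonempty U] {n : ℕ}
    (c c' : (i : Fin n) → (Fin i.val → U) → U → ℝ)
    (hc0 : ∀ i v a, 0 ≤ c i v a) (hc1 : ∀ i v, ∑ a, c i v a = 1)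
    (hc'0 : ∀ i v a, 0 ≤ c' i v a) (hc'1 : ∀ i v, ∑ a, c' i v a = 1)
    (F : Finset (Fin n)) (hF : ∀ i ∉ F, c i = c' i) :
    ∑ u : Fin n → U,
        |(∏ i, c i (pre u i) (u i)) - (∏ i, c' i (pre u i) (u i))| ≤
      ∑ i ∈ F, ∑ v : Fin i.val → U,
        (∏ j : Fin i.val, c (Fin.castLT j (j.isLt.trans i.isLt)) (pre v j) (v j)) *
          ∑ a, |c i v a - c' i v a| := by
  classical
  set C : (i : ℕ) → (Fin i → U) → U → ℝ :=
    fun i => if h : i < n then c ⟨i, h⟩ else fun _ _ => (Fintype.card U : ℝ)⁻¹ with hCdef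
  set C' : (i : ℕ) → (Fin i → U) → U → ℝ :=
    fun i => if h : i < n then c' ⟨i, h⟩ else fun _ _ => (Fintype.card U : ℝ)⁻¹ with hC'def
  have hcard : (0:ℝ) < (Fintype.card U : ℝ) := by
    exact_mod_cast Fintype.card_pos
  have hC0 : ∀ i v a, 0 ≤ C i v a := by
    intro i v a; simp only [hCdef]
    split
    · exact hc0 _ _ _
    · positivity
  have hC'0 : ∀ i v a, 0 ≤ C' i v a := by
    intro i v a; simp only [hC'def]
    split
    · exact hc'0 _ _ _
    · positivity
  have hC1 : ∀ i v, ∑ a, C i v a = 1 := by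
    intro i v; simp only [hCdef]
    split
    · exact hc1 _ _
    · rw [Finset.sum_const, Finset.card_univ, nsmul_eq_mul, mul_inv_cancel₀ hcard.ne']
  have hC'1 : ∀ i v, ∑ a, C' i v a = 1 := by
    intro i v; simp only [hC'def]
    split
    · exact hc'1 _ _
    · rw [Finset.sum_const, Finset.card_univ, nsmul_eq_mul, mul_inv_cancel₀ hcard.ne']
  have hCc : ∀ (i : Fin n), C i.val = c i := by
    intro i; simp only [hCdef, dif_pos i.isLt]
  have hC'c : ∀ (i : Fin n), C' i.val = c' i := by
    intro i; simp only [hC'def, dif_pos i.isLt]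
  have h := aux_lemma C C' hC0 hC1 hC'0 hC'1 n
  have hL : ∑ u : Fin n → U,
      |(∏ i, c i (pre u i) (u i)) - (∏ i, c' i (pre u i) (u i))| =
      ∑ u : Fin n → U,
        |(∏ i : Fin n, C i.val (pre u i) (u i)) - (∏ i : Fin n, C' i.val (pre u i) (u i))| := by
    apply Finset.sum_congr rfl; intro u _
    have e1 : (∏ i : Fin n, c i (pre u i) (u i)) = ∏ i : Fin n, C i.val (pre u i) (u i) :=
      Finset.prod_congr rfl fun i _ => by rw [hCc]
    have e2 : (∏ i : Fin n, c' i (pre u i) (u i)) = ∏ i : Fin n, C' i.val (pre u i) (u i) :=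
      Finset.prod_congr rfl fun i _ => by rw [hC'c]
    rw [e1, e2]
  have hR : ∑ i ∈ Finset.range n, ∑ v : Fin i → U,
      (∏ j : Fin i, C j.val (pre v j) (v j)) * ∑ a, |C i v a - C' i v a| =
      ∑ i : Fin n, ∑ v : Fin i.val → U,
        (∏ j : Fin i.val, c (Fin.castLT j (j.isLt.trans i.isLt)) (pre v j) (v j)) *
          ∑ a, |c i v a - c' i v a| := by
    rw [← Fin.sum_univ_eq_sum_range (fun i => ∑ v : Fin i → U,
      (∏ j : Fin i, C j (pre v j) (v j)) * ∑ a, |C i v a - C' i v a|)]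
    apply Finset.sum_congr rfl; intro i _
    apply Finset.sum_congr rfl; intro v _
    congr 1
    · refine Finset.prod_congr rfl fun j _ => ?_
      have : C j.val = c (Fin.castLT j (j.isLt.trans i.isLt)) := by
        simp only [hCdef, dif_pos (j.isLt.trans i.isLt)]
        rfl
      rw [this]
    · refine Finset.sum_congr rfl fun a _ => ?_
      have h1 : C i.val v a = c i v a := by rw [hCc]
      have h2 : C' i.val v a = c' i v a := by rw [hC'c]
      rw [h1, h2]
  rw [hL]
  refine h.trans ?_
  rw [hR]
  refine le_of_eq (Finset.sum_subset (Finset.subset_univ F) ?_).symm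
  intro i _ hi
  have : c i = c' i := hF i hi
  simp [this]
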